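/- For positive integers d, n, a with a < (d+3)/2, the number of partitions with perimeter n into d-distinct parts all ≥ a is at most the number of partitions with perimeter n into parts congruent to ±a modulo d+3. -/

import Mathlib

/-- A partition: a nonempty, nonincreasing list of positive integers. -/
def IsPartition (l : List ℕ) : Prop :=
  l ≠ [] ∧ l.Pairwise (· ≥ ·) ∧ ∀ x ∈ l, 0 < x

/-- Perimeter: (largest part) + (number of parts) - 1. -/
def perimeter (l : List ℕ) : ℕ := l.headI + l.length - 1

/-- d-distinct: consecutive parts differ by at least d. -/
def DDistinct (d : ℕ) (l : List ℕ) : Prop := l.Chain' (fun x y => y + d ≤ x)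

namespace Stmt8Aux

/-- The i-th smallest positive integer congruent to ±a mod (d+3) (1-indexed; selt 0 = 0
when a > 0 is subtracted... actually selt 0 = 0 - a = 0). -/
def selt (d a i : ℕ) : ℕ := if i % 2 = 1 then a + (i / 2) * (d + 3) else (i / 2) * (d + 3) - a

lemma selt_lt (d a : ℕ) (ha : 0 < a) (h : 2 * a < d + 3) (i : ℕ) :
    selt d a i < selt d a (i + 1) := by
  rcases Nat.even_or_odd i with ⟨t, ht⟩ | ⟨t, ht⟩
  · have h1 : i % 2 = 0 := by omega
    have h2 : (i + 1) % 2 = 1 := by omega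
    have h3 : i / 2 = t := by omega
    have h4 : (i + 1) / 2 = t := by omega
    simp only [selt, h1, h2, h3, h4]
    norm_num
    omega
  · have h1 : i % 2 = 1 := by omega
    have h2 : (i + 1) % 2 = 0 := by omega
    have h3 : i / 2 = t := by omega
    have h4 : (i + 1) / 2 = t + 1 := by omega
    simp only [selt, h1, h2, h3, h4]
    norm_num
    have : (t + 1) * (d + 3) = t * (d + 3) + (d + 3) := by ring
    omega

lemma selt_strictMono (d a : ℕ) (ha : 0 < a) (h : 2 * a < d + 3) :
    StrictMono (selt d a) :=
  strictMono_nat_of_lt_succ (selt_lt d a ha h)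

lemma selt_one (d a : ℕ) : selt d a 1 = a := by simp [selt]

lemma selt_ge (d a : ℕ) (ha : 0 < a) (h : 2 * a < d + 3) (i : ℕ) (hi : 1 ≤ i) :
    a ≤ selt d a i := by
  have := (selt_strictMono d a ha h).monotone hi
  rwa [selt_one] at this

lemma selt_le (d a : ℕ) (ha : 0 < a) (hd : 0 < d) (k : ℕ) (hk : 1 ≤ k) :
    selt d a k ≤ a + (k - 1) * (d + 1) := by
  rcases Nat.even_or_odd k with ⟨t, htk⟩ | ⟨t, htk⟩
  · -- k = 2t, t ≥ 1
    have ht1 : 1 ≤ t := by omega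
    have h1 : k % 2 = 0 := by omega
    have h3 : k / 2 = t := by omega
    simp only [selt, h1, h3]
    norm_num
    rw [show k - 1 = 2 * t - 1 by omega]
    have key : t * (d + 3) ≤ a + a + (2 * t - 1) * (d + 1) := by
      obtain ⟨s, rfl⟩ : ∃ s, t = s + 1 := ⟨t - 1, by omega⟩
      have e1 : (s + 1) * (d + 3) = s * (d + 3) + (d + 3) := by ring
      have e2 : (2 * (s + 1) - 1) * (d + 1) = s * (2 * (d + 1)) + (d + 1) := by
        have : 2 * (s + 1) - 1 = 2 * s + 1 := by omega
        rw [this]; ring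
      have e3 : s * (d + 3) ≤ s * (2 * (d + 1)) :=
        Nat.mul_le_mul_left s (by omega)
      omega
    omega
  · -- k = 2t+1
    have h1 : k % 2 = 1 := by omega
    have h3 : k / 2 = t := by omega
    simp only [selt, h1, h3]
    norm_num
    have e2 : (k - 1) * (d + 1) = t * (2 * (d + 1)) := by
      have : k - 1 = 2 * t := by omega
      rw [this]; ring
    have e3 : t * (d + 3) ≤ t * (2 * (d + 1)) := Nat.mul_le_mul_left t (by omega)
    omega

lemma selt_mem (d a : ℕ) (ha : 0 < a) (h : 2 * a < d + 3) (i : ℕ) (hi : 1 ≤ i) :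
    selt d a i % (d + 3) = a % (d + 3) ∨ (selt d a i + a) % (d + 3) = 0 := by
  rcases Nat.even_or_odd i with ⟨t, hti⟩ | ⟨t, hti⟩
  · -- even, t ≥ 1
    have ht1 : 1 ≤ t := by omega
    have h1 : i % 2 = 0 := by omega
    have h3 : i / 2 = t := by omega
    right
    simp only [selt, h1, h3]
    norm_num
    have ha3 : a ≤ t * (d + 3) := by
      calc a ≤ d + 3 := by omega
      _ = 1 * (d + 3) := by ring
      _ ≤ t * (d + 3) := Nat.mul_le_mul_right _ ht1
    rw [Nat.sub_add_cancel ha3]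
    simp [Nat.mul_mod_left]
  · have h1 : i % 2 = 1 := by omega
    have h3 : i / 2 = t := by omega
    left
    simp only [selt, h1, h3]
    norm_num [Nat.add_mul_mod_self_right]

/-- The body of the image list. -/
def body (d a c : ℕ) : List ℕ → List ℕ
  | [] => []
  | [x] => List.replicate (x - a + c) (selt d a 1)
  | x :: y :: t => List.replicate (x - y - d) (selt d a (t.length + 2)) ++ body d a c (y :: t)

lemma body_len (d a c : ℕ) : ∀ l : List ℕ, l ≠ [] → DDistinct d l → (∀ x ∈ l, a ≤ x) →
    (body d a c l).length + (a + (l.length - 1) * d) = l.headI + c := by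
  intro l
  induction l with
  | nil => simp
  | cons x t ih =>
    cases t with
    | nil =>
      intro _ _ hax
      have : a ≤ x := hax x (by simp)
      simp [body, List.length_replicate]
      omega
    | cons y s =>
      intro _ hch hax
      have hch' : DDistinct d (y :: s) := hch.tail
      have hxy : y + d ≤ x := (List.isChain_cons_cons.mp hch).1
      have hax' : ∀ z ∈ y :: s, a ≤ z := fun z hz => hax z (by simp [hz])
      have IH := ih (by simp) hch' hax'
      simp only [body, List.length_append, List.length_replicate, List.length_cons,
        List.headI] at IH ⊢
      have e1 : (s.length + 1 + 1 - 1) * d = (s.length + 1 - 1) * d + d := by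
        have : s.length + 1 + 1 - 1 = (s.length + 1 - 1) + 1 := by omega
        rw [this, Nat.succ_mul]
      omega

lemma body_mem (d a c : ℕ) : ∀ l : List ℕ, ∀ x ∈ body d a c l,
    ∃ i, 1 ≤ i ∧ i ≤ l.length ∧ x = selt d a i := by
  intro l
  induction l with
  | nil => simp [body]
  | cons x t ih =>
    cases t with
    | nil =>
      intro z hz
      simp only [body] at hz
      exact ⟨1, le_refl _, by simp, (List.eq_of_mem_replicate hz)⟩
    | cons y s =>
      intro z hz
      simp only [body, List.mem_append] at hz
      rcases hz with hz | hz
      · exact ⟨s.length + 2, by omega, by simp, List.eq_of_mem_replicate hz⟩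
      · obtain ⟨i, h1, h2, h3⟩ := ih z hz
        exact ⟨i, h1, by simp at h2 ⊢; omega, h3⟩

lemma body_le (d a : ℕ) (ha : 0 < a) (h : 2 * a < d + 3) (c : ℕ) (l : List ℕ)
    (x : ℕ) (hx : x ∈ body d a c l) : x ≤ selt d a l.length := by
  obtain ⟨i, h1, h2, h3⟩ := body_mem d a c l x hx
  rw [h3]
  exact (selt_strictMono d a ha h).monotone h2

lemma body_sorted (d a : ℕ) (ha : 0 < a) (h : 2 * a < d + 3) (c : ℕ) :
    ∀ l : List ℕ, (body d a c l).Pairwise (· ≥ ·) := by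
  intro l
  induction l with
  | nil => simp [body]
  | cons x t ih =>
    cases t with
    | nil =>
      simp only [body]
      exact List.pairwise_replicate.mpr (Or.inr (le_refl _))
    | cons y s =>
      simp only [body, List.pairwise_append]
      refine ⟨List.pairwise_replicate.mpr (Or.inr (le_refl _)), ih, ?_⟩
      intro u hu v hv
      have hu' := List.eq_of_mem_replicate hu
      have hv' := body_le d a ha h c (y :: s) v hv
      rw [hu']
      calc v ≤ selt d a (y :: s).length := hv'
        _ ≤ selt d a (s.length + 2) := by
            apply (selt_strictMono d a ha h).monotone; simp

lemma body_inj (d a c : ℕ) (ha : 0 < a) (h : 2 * a < d + 3) :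
    ∀ l l' : List ℕ, DDistinct d l → DDistinct d l' → (∀ x ∈ l, a ≤ x) → (∀ x ∈ l', a ≤ x) →
    l.length = l'.length → body d a c l = body d a c l' → l = l' := by
  intro l
  induction l with
  | nil =>
    intro l' _ _ _ _ hlen _
    cases l' with
    | nil => rfl
    | cons _ _ => simp at hlen
  | cons x t ih =>
    intro l' hch hch' hax hax' hlen hbody
    cases l' with
    | nil => simp at hlen
    | cons x' t' =>
      cases t with
      | nil =>
        cases t' with
        | cons _ _ => simp at hlen
        | nil =>
          simp only [body] at hbody
          have := congrArg List.length hbody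
          simp only [List.length_replicate] at this
          have hx : a ≤ x := hax x (by simp)
          have hx' : a ≤ x' := hax' x' (by simp)
          have : x = x' := by omega
          rw [this]
      | cons y s =>
        cases t' with
        | nil => simp at hlen
        | cons y' s' =>
          have hslen : s.length = s'.length := by simpa using hlen
          simp only [body, hslen] at hbody
          -- count the top value
          set v := selt d a (s'.length + 2) with hv
          have hnotmem : ∀ (z : ℕ) (m : List ℕ), m.length ≤ s'.length + 1 →
              (∀ w ∈ body d a c m, True) → True := fun _ _ _ _ => trivial
          have hcount : ∀ m : List ℕ, m.length = s'.length + 1 →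
              List.count v (body d a c m) = 0 := by
            intro m hm
            rw [List.count_eq_zero]
            intro hmem
            obtain ⟨i, h1, h2, h3⟩ := body_mem d a c m v hmem
            rw [hm] at h2
            have : selt d a i < selt d a (s'.length + 2) :=
              (selt_strictMono d a ha h) (by omega)
            omega
          have hc1 := congrArg (List.count v) hbody
          rw [List.count_append, List.count_append, List.count_replicate_self,
            List.count_replicate_self,
            hcount (y :: s) (by simp [hslen]), hcount (y' :: s') (by simp)] at hc1
          have hxy : y + d ≤ x := (List.isChain_cons_cons.mp hch).1
          have hxy' : y' + d ≤ x' := (List.isChain_cons_cons.mp hch').1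
          have hrep : x - y - d = x' - y' - d := by omega
          rw [hrep] at hbody
          have htail : body d a c (y :: s) = body d a c (y' :: s') :=
            List.append_cancel_left hbody
          have := ih (y' :: s') hch.tail hch'.tail
            (fun z hz => hax z (by simp [List.mem_cons] at hz ⊢; tauto))
            (fun z hz => hax' z (by simp [List.mem_cons] at hz ⊢; tauto))
            (by simp [hslen]) htail
          have hyy : y = y' := by
            have := congrArg (fun m => List.headI m) this
            simpa using this
          have : x = x' := by omega
          rw [this]
          congr 1

/-- The injection. -/
def Fmap (d a : ℕ) (l : List ℕ) : List ℕ :=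
  selt d a l.length ::
    body d a (a + (l.length - 1) * (d + 1) - selt d a l.length) l

lemma finiteAux (n : ℕ) (P : List ℕ → Prop)
    (hP : ∀ l, P l → l.length ≤ n ∧ ∀ x ∈ l, x ≤ n) :
    Finite {l : List ℕ // P l} := by
  let f : {l : List ℕ // P l} → Fin (n + 1) × (Fin (n + 1) → Fin (n + 1)) :=
    fun ⟨l, hl⟩ =>
      (⟨l.length, by have := (hP l hl).1; omega⟩,
        fun i => ⟨l.getD i 0, by
          rcases Nat.lt_or_ge (i : ℕ) l.length with hi | hi
          · rw [List.getD_eq_getElem _ _ hi]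
            have := (hP l hl).2 _ (List.getElem_mem hi)
            omega
          · rw [List.getD_eq_default _ _ hi]; omega⟩)
  have hf : Function.Injective f := by
    rintro ⟨l, hl⟩ ⟨l', hl'⟩ hff
    simp only [f, Prod.mk.injEq] at hff
    obtain ⟨h1, h2⟩ := hff
    have hlen : l.length = l'.length := by
      have := congrArg (fun x : Fin (n+1) => (x : ℕ)) h1
      simpa using this
    have hn1 : l.length ≤ n := (hP l hl).1
    have hll : l = l' := by
      apply List.ext_getElem hlen
      intro i hi hi'
      have hfun := congrFun h2 ⟨i, by omega⟩
      have h3 := congrArg (fun x : Fin (n+1) => (x : ℕ)) hfun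
      simp only at h3
      rwa [List.getD_eq_getElem _ _ hi, List.getD_eq_getElem _ _ hi'] at h3
    exact Subtype.ext hll
  exact Finite.of_injective f hf

end Stmt8Aux

open Stmt8Aux in
theorem stmt8 (d n a : ℕ) (hd : 0 < d) (hn : 0 < n) (ha : 0 < a) (h : 2 * a < d + 3) :
    Nat.card {l : List ℕ // IsPartition l ∧ perimeter l = n ∧ DDistinct d l ∧ ∀ x ∈ l, a ≤ x}
      ≤ Nat.card {l : List ℕ // IsPartition l ∧ perimeter l = n ∧
          ∀ x ∈ l, x % (d + 3) = a % (d + 3) ∨ (x + a) % (d + 3) = 0} := by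
  classical
  set Q : List ℕ → Prop := fun l => IsPartition l ∧ perimeter l = n ∧
      ∀ x ∈ l, x % (d + 3) = a % (d + 3) ∨ (x + a) % (d + 3) = 0 with hQ
  have hfin : Finite {l : List ℕ // Q l} := by
    apply finiteAux n
    rintro l ⟨⟨hne, hsort, hpos⟩, hperi, _⟩
    have hlen1 : 1 ≤ l.length := by
      cases l with | nil => exact absurd rfl hne | cons _ _ => simp
    have hhead : l.headI ∈ l := by
      cases l with | nil => exact absurd rfl hne | cons z t => simp
    have hh1 : 1 ≤ l.headI := hpos _ hhead
    have hperi' : l.headI + l.length - 1 = n := hperi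
    constructor
    · omega
    · intro x hx
      have : x ≤ l.headI := by
        cases l with
        | nil => exact absurd rfl hne
        | cons z t =>
          simp only [List.headI]
          rcases List.mem_cons.mp hx with rfl | hx'
          · exact le_refl _
          · exact List.rel_of_pairwise_cons hsort hx'
      omega
  -- the injection
  have key : ∀ l : List ℕ,
      (IsPartition l ∧ perimeter l = n ∧ DDistinct d l ∧ ∀ x ∈ l, a ≤ x) → Q (Fmap d a l) := by
    rintro l ⟨⟨hne, hsort, hpos⟩, hperi, hdd, hge⟩
    have hlen1 : 1 ≤ l.length := by
      cases l with | nil => exact absurd rfl hne | cons _ _ => simp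
    have hle := selt_le d a ha hd l.length hlen1
    have hbl := body_len d a (a + (l.length - 1) * (d + 1) - selt d a l.length) l hne hdd hge
    have hhead : l.headI ∈ l := by
      cases l with | nil => exact absurd rfl hne | cons z t => simp
    have hh1 : a ≤ l.headI := hge _ hhead
    have hperi' : l.headI + l.length - 1 = n := hperi
    have hsga : a ≤ selt d a l.length := selt_ge d a ha h l.length hlen1
    refine ⟨⟨by simp [Fmap], ?_, ?_⟩, ?_, ?_⟩
    · -- sorted
      rw [Fmap, List.pairwise_cons]
      exact ⟨fun b hb => body_le d a ha h _ l b hb, body_sorted d a ha h _ l⟩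
    · -- positive
      intro x hx
      rw [Fmap, List.mem_cons] at hx
      rcases hx with rfl | hx
      · omega
      · obtain ⟨i, h1, _, h3⟩ := body_mem d a _ l x hx
        have := selt_ge d a ha h i h1
        omega
    · -- perimeter
      show (Fmap d a l).headI + (Fmap d a l).length - 1 = n
      rw [Fmap]
      simp only [List.headI, List.length_cons]
      have e1 : (l.length - 1) * (d + 1) = (l.length - 1) * d + (l.length - 1) := by
        rw [Nat.mul_succ]
      omega
    · -- congruence
      intro x hx
      rw [Fmap, List.mem_cons] at hx
      rcases hx with rfl | hx
      · exact selt_mem d a ha h l.length hlen1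
      · obtain ⟨i, h1, _, h3⟩ := body_mem d a _ l x hx
        rw [h3]
        exact selt_mem d a ha h i h1
  let Φ : {l : List ℕ // IsPartition l ∧ perimeter l = n ∧ DDistinct d l ∧ ∀ x ∈ l, a ≤ x} →
      {l : List ℕ // Q l} := fun ⟨l, hl⟩ => ⟨Fmap d a l, key l hl⟩
  have hΦ : Function.Injective Φ := by
    rintro ⟨l, hl⟩ ⟨l', hl'⟩ hff
    simp only [Φ, Subtype.mk.injEq, Fmap] at hff
    rw [List.cons.injEq] at hff
    obtain ⟨h1, h2⟩ := hff
    have hlen : l.length = l'.length := (selt_strictMono d a ha h).injective h1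
    rw [hlen] at h2
    exact Subtype.ext (body_inj d a _ ha h l l' hl.2.2.1 hl'.2.2.1 hl.2.2.2 hl'.2.2.2 hlen h2)
  exact Nat.card_le_card_of_injective Φ hΦ
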